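/- arXiv:2310.04340 — 4 statements merged into one kernel-verified Lean document; each statement's English description precedes it below -/
import Mathlib

section
/- Let Q ∈ S^n. (i) For each ρ ∈ {2,…,n}, if there exists an optimal solution (x*,X*) of min{⟨Q,X⟩ : (x,X) ∈ F^{R3}} with ‖x*‖₀ ≤ ρ, then ℓ^{R3}(Q) = ℓ^{R3}_ρ(Q). (ii) F^{R3}_n = F^{R3} and ℓ^{R3}(Q) = ℓ^{R3}_n(Q). -/
open Matrix BigOperators

noncomputable section

def simplexF (n : ℕ) : Set (Fin n → ℝ) :=
  {x | (∑ i, x i) = 1 ∧ ∀ i, 0 ≤ x i}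

def sparsity {n : ℕ} (x : Fin n → ℝ) : ℕ :=
  Set.ncard {i | x i ≠ 0}

def sparseF (n ρ : ℕ) : Set (Fin n → ℝ) :=
  {x | x ∈ simplexF n ∧ sparsity x ≤ ρ}

def quadForm {n : ℕ} (Q : Matrix (Fin n) (Fin n) ℝ) (x : Fin n → ℝ) : ℝ :=
  x ⬝ᵥ Q.mulVec x

def ell {n : ℕ} (Q : Matrix (Fin n) (Fin n) ℝ) : ℝ :=
  sInf (quadForm Q '' simplexF n)

def ellSparse {n : ℕ} (Q : Matrix (Fin n) (Fin n) ℝ) (ρ : ℕ) : ℝ :=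
  sInf (quadForm Q '' sparseF n ρ)

def ip {n : ℕ} (Q X : Matrix (Fin n) (Fin n) ℝ) : ℝ :=
  ∑ i, ∑ j, Q i j * X i j

def R1Feasible {n : ℕ} (ρ : ℕ) (x u : Fin n → ℝ)
    (X U R : Matrix (Fin n) (Fin n) ℝ) : Prop :=
  X.IsSymm ∧ U.IsSymm ∧
  (∑ i, x i) = 1 ∧
  (∑ i, u i) = (ρ : ℝ) ∧
  (∀ i, x i ≤ u i) ∧
  (∀ i, 0 ≤ x i) ∧
  (∀ i, U i i = u i) ∧
  (∀ i, (∑ j, X i j) = x i) ∧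
  (∀ j, (∑ i, R i j) = u j) ∧
  (∀ i, (∑ j, R i j) = (ρ : ℝ) * x i) ∧
  (∀ i, (∑ j, U i j) = (ρ : ℝ) * u i) ∧
  (∀ i j, 0 ≤ X i j - R j i - R i j + U i j) ∧
  (∀ i j, X i j - R j i ≤ 0) ∧
  (∀ i j, R i j - U i j ≤ 0) ∧
  (∀ i j, 0 ≤ X i j) ∧ (∀ i j, 0 ≤ R i j) ∧ (∀ i j, 0 ≤ U i j)

def FR1proj (n ρ : ℕ) : Set ((Fin n → ℝ) × Matrix (Fin n) (Fin n) ℝ) :=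
  {p | ∃ u U R, R1Feasible ρ p.1 u p.2 U R}

def FR1 (n : ℕ) : Set ((Fin n → ℝ) × Matrix (Fin n) (Fin n) ℝ) :=
  {p | p.2.IsSymm ∧ (∑ i, p.1 i) = 1 ∧ (∀ i, (∑ j, p.2 i j) = p.1 i) ∧
    (∀ i, 0 ≤ p.1 i) ∧ (∀ i j, 0 ≤ p.2 i j)}

def bigMat {n : ℕ} (x u : Fin n → ℝ) (X U R : Matrix (Fin n) (Fin n) ℝ) :
    Matrix (Unit ⊕ (Fin n ⊕ Fin n)) (Unit ⊕ (Fin n ⊕ Fin n)) ℝ :=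
  Matrix.fromBlocks (Matrix.of fun _ _ => (1 : ℝ))
    (Matrix.of fun (_ : Unit) j => Sum.elim x u j)
    (Matrix.of fun i (_ : Unit) => Sum.elim x u i)
    (Matrix.fromBlocks X R Rᵀ U)

def R3Feasible {n : ℕ} (ρ : ℕ) (x u : Fin n → ℝ)
    (X U R : Matrix (Fin n) (Fin n) ℝ) : Prop :=
  R1Feasible ρ x u X U R ∧ (bigMat x u X U R).PosSemidef

def FR3proj (n ρ : ℕ) : Set ((Fin n → ℝ) × Matrix (Fin n) (Fin n) ℝ) :=
  {p | ∃ u U R, R3Feasible ρ p.1 u p.2 U R}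

def FR3 (n : ℕ) : Set ((Fin n → ℝ) × Matrix (Fin n) (Fin n) ℝ) :=
  {p | p.2.IsSymm ∧ (∑ i, p.1 i) = 1 ∧ (∀ i, (∑ j, p.2 i j) = p.1 i) ∧
    (∀ i, 0 ≤ p.1 i) ∧ (∀ i j, 0 ≤ p.2 i j) ∧
    (p.2 - Matrix.vecMulVec p.1 p.1).PosSemidef}

def ellR3 {n : ℕ} (Q : Matrix (Fin n) (Fin n) ℝ) : ℝ :=
  sInf ((fun p => ip Q p.2) '' FR3 n)

def ellR3proj {n : ℕ} (Q : Matrix (Fin n) (Fin n) ℝ) (ρ : ℕ) : ℝ :=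
  sInf ((fun p => ip Q p.2) '' FR3proj n ρ)

section scratch
variable {n : ℕ}

lemma vmv_mulVec (a b w : Fin n → ℝ) :
    Matrix.vecMulVec a b *ᵥ w = (b ⬝ᵥ w) • a := by
  funext i
  simp only [Matrix.mulVec, Matrix.vecMulVec_apply, dotProduct, Pi.smul_apply, smul_eq_mul,
    Finset.sum_mul]
  exact Finset.sum_congr rfl fun j _ => by ring

lemma quad_bigMat (x u : Fin n → ℝ) (X U R : Matrix (Fin n) (Fin n) ℝ)
    (c0 : ℝ) (v w : Fin n → ℝ) :
    (Sum.elim (fun _ => c0) (Sum.elim v w)) ⬝ᵥ (bigMat x u X U R) *ᵥ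
      (Sum.elim (fun _ => c0) (Sum.elim v w)) =
      c0 * c0 + c0 * (x ⬝ᵥ v) + c0 * (u ⬝ᵥ w) + (v ⬝ᵥ x) * c0 + (w ⬝ᵥ u) * c0
      + v ⬝ᵥ X *ᵥ v + v ⬝ᵥ R *ᵥ w + w ⬝ᵥ Rᵀ *ᵥ v + w ⬝ᵥ U *ᵥ w := by
  simp only [bigMat, Matrix.fromBlocks_mulVec, sumElim_dotProduct_sumElim,
    dotProduct_add, add_dotProduct, dotProduct_add, add_dotProduct,
    Sum.elim_comp_inl, Sum.elim_comp_inr]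
  simp only [dotProduct, Matrix.mulVec, Matrix.of_apply, Fintype.sum_unique,
    Fintype.sum_sum_type, Sum.elim_inl, Sum.elim_inr, Finset.mul_sum, Finset.sum_mul, one_mul]
  ring_nf
  rw [Finset.mul_sum, Finset.mul_sum]
  ring_nf

end scratch
section scratch2
variable {n : ℕ}

lemma herm_of_symm {m : Type*} [Fintype m] {M : Matrix m m ℝ} (h : M.IsSymm) :
    M.IsHermitian := by
  rw [Matrix.IsHermitian, Matrix.conjTranspose_eq_transpose_of_trivial]; exact h

lemma symm_vmv (a : Fin n → ℝ) : (Matrix.vecMulVec a a).IsSymm := by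
  ext i j
  simp [Matrix.vecMulVec_apply, mul_comm]

lemma dot_sub_vmv (x : Fin n → ℝ) (X : Matrix (Fin n) (Fin n) ℝ) (v : Fin n → ℝ) :
    v ⬝ᵥ (X - Matrix.vecMulVec x x) *ᵥ v = v ⬝ᵥ X *ᵥ v - (x ⬝ᵥ v) * (x ⬝ᵥ v) := by
  rw [Matrix.sub_mulVec, dotProduct_sub, vmv_mulVec, dotProduct_smul, smul_eq_mul,
    dotProduct_comm v x]

lemma psd_sub_of_big {x u : Fin n → ℝ} {X U R : Matrix (Fin n) (Fin n) ℝ}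
    (hX : X.IsSymm) (h : (bigMat x u X U R).PosSemidef) :
    (X - Matrix.vecMulVec x x).PosSemidef := by
  rw [Matrix.posSemidef_iff_dotProduct_mulVec]
  constructor
  · exact (herm_of_symm hX).sub (herm_of_symm (symm_vmv x))
  · intro v
    rw [star_trivial, dot_sub_vmv]
    have h2 := h.dotProduct_mulVec_nonneg (Sum.elim (fun _ => -(x ⬝ᵥ v)) (Sum.elim v 0))
    rw [star_trivial, quad_bigMat] at h2
    simp only [dotProduct_zero, zero_dotProduct, Matrix.mulVec_zero, mul_zero, zero_mul,
      add_zero] at h2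
    rw [dotProduct_comm v x] at h2
    nlinarith [h2]

lemma psd_big_of_sub {x u : Fin n → ℝ} {X : Matrix (Fin n) (Fin n) ℝ}
    (hX : X.IsSymm) (hpsd : (X - Matrix.vecMulVec x x).PosSemidef) :
    (bigMat x u X (Matrix.vecMulVec u u) (Matrix.vecMulVec x u)).PosSemidef := by
  rw [Matrix.posSemidef_iff_dotProduct_mulVec]
  constructor
  · apply Matrix.IsHermitian.fromBlocks
    · ext i j; rfl
    · ext i j; simp [Matrix.conjTranspose_apply]
    · apply Matrix.IsHermitian.fromBlocks
      · exact herm_of_symm hX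
      · rw [Matrix.conjTranspose_eq_transpose_of_trivial]
      · exact herm_of_symm (symm_vmv u)
  · intro z
    have hz : z = Sum.elim (fun _ => z (Sum.inl ()))
        (Sum.elim (fun i => z (Sum.inr (Sum.inl i))) (fun i => z (Sum.inr (Sum.inr i)))) := by
      funext i; rcases i with _ | (_ | _) <;> rfl
    rw [star_trivial, hz, quad_bigMat]
    set c0 := z (Sum.inl ())
    set v : Fin n → ℝ := fun i => z (Sum.inr (Sum.inl i))
    set w : Fin n → ℝ := fun i => z (Sum.inr (Sum.inr i))
    have hR : Matrix.vecMulVec x u *ᵥ w = (u ⬝ᵥ w) • x := vmv_mulVec x u w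
    have hRT : (Matrix.vecMulVec x u)ᵀ *ᵥ v = (x ⬝ᵥ v) • u := by
      have : (Matrix.vecMulVec x u)ᵀ = Matrix.vecMulVec u x := by
        ext i j; simp [Matrix.vecMulVec_apply, mul_comm]
      rw [this, vmv_mulVec]
    have hU : Matrix.vecMulVec u u *ᵥ w = (u ⬝ᵥ w) • u := vmv_mulVec u u w
    rw [hR, hRT, hU, dotProduct_smul, dotProduct_smul, dotProduct_smul, smul_eq_mul,
      smul_eq_mul, smul_eq_mul, dotProduct_comm v x, dotProduct_comm w u]
    have hkey := hpsd.dotProduct_mulVec_nonneg v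
    rw [star_trivial, dot_sub_vmv] at hkey
    nlinarith [hkey, sq_nonneg (c0 + x ⬝ᵥ v + u ⬝ᵥ w)]

end scratch2
section scratch3
variable {n : ℕ}

lemma x_le_one {p : (Fin n → ℝ) × Matrix (Fin n) (Fin n) ℝ} (hp : p ∈ FR3 n) (i : Fin n) :
    p.1 i ≤ 1 := by
  obtain ⟨-, hsum, -, hx, -⟩ := hp
  calc p.1 i ≤ ∑ j, p.1 j := Finset.single_le_sum (fun j _ => hx j) (Finset.mem_univ i)
  _ = 1 := hsum

lemma X_le_one {p : (Fin n → ℝ) × Matrix (Fin n) (Fin n) ℝ} (hp : p ∈ FR3 n) (i j : Fin n) :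
    p.2 i j ≤ 1 := by
  obtain ⟨-, hsum, hrow, hx, hX, -⟩ := id hp
  calc p.2 i j ≤ ∑ k, p.2 i k := Finset.single_le_sum (fun k _ => hX i k) (Finset.mem_univ j)
  _ = p.1 i := hrow i
  _ ≤ 1 := x_le_one hp i

lemma bddBelow_FR3 (Q : Matrix (Fin n) (Fin n) ℝ) :
    BddBelow ((fun p => ip Q p.2) '' FR3 n) := by
  refine ⟨-(∑ i, ∑ j, |Q i j|), ?_⟩
  rintro r ⟨p, hp, rfl⟩
  simp only [ip]
  rw [← Finset.sum_neg_distrib]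
  refine Finset.sum_le_sum fun i _ => ?_
  rw [← Finset.sum_neg_distrib]
  refine Finset.sum_le_sum fun j _ => ?_
  have h0 := hp.2.2.2.2.1 i j
  have h1 := X_le_one hp i j
  have h2 : -|Q i j| ≤ Q i j := neg_abs_le _
  nlinarith [abs_nonneg (Q i j)]

lemma lift_mem {p : (Fin n → ℝ) × Matrix (Fin n) (Fin n) ℝ} (hp : p ∈ FR3 n)
    (S : Finset (Fin n)) (hS : ∀ i, p.1 i ≠ 0 → i ∈ S) :
    p ∈ FR3proj n S.card := by
  obtain ⟨hsym, hsum, hrow, hx, hX, hpsd⟩ := hp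
  set x := p.1 with hxdef
  set X := p.2 with hXdef
  set u : Fin n → ℝ := fun i => if i ∈ S then 1 else 0 with hu
  have hu0 : ∀ i, 0 ≤ u i := by intro i; simp only [hu]; split <;> norm_num
  have hu1 : ∀ i, u i ≤ 1 := by intro i; simp only [hu]; split <;> norm_num
  have hxz : ∀ i, i ∉ S → x i = 0 := by
    intro i hi; by_contra h; exact hi (hS i h)
  have hxu : ∀ i, x i ≤ u i := by
    intro i
    simp only [hu]
    split
    · exact x_le_one ⟨hsym, hsum, hrow, hx, hX, hpsd⟩ i
    · next h => rw [hxz i h]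
  have hXrow0 : ∀ i, x i = 0 → ∀ j, X i j = 0 := by
    intro i hi j
    have := (Finset.sum_eq_zero_iff_of_nonneg (fun k _ => hX i k)).mp
      ((hrow i).trans hi) j (Finset.mem_univ j)
    exact this
  have hXsymm : ∀ i j, X j i = X i j := fun i j => hsym.apply i j
  have hXle : ∀ i j, X i j ≤ x j := by
    intro i j
    calc X i j = X j i := (hXsymm j i)
    _ ≤ ∑ k, X j k := Finset.single_le_sum (fun k _ => hX j k) (Finset.mem_univ i)
    _ = x j := hrow j
  have hXdiag : ∀ i, x i * x i ≤ X i i := by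
    intro i
    have h := hpsd.dotProduct_mulVec_nonneg (Pi.single i 1)
    rw [star_trivial, dot_sub_vmv] at h
    have h1 : (Pi.single i 1 : Fin n → ℝ) ⬝ᵥ X *ᵥ Pi.single i 1 = X i i := by
      simp [dotProduct, Matrix.mulVec, Pi.single_apply, Finset.sum_ite_eq']
    have h2 : x ⬝ᵥ (Pi.single i 1 : Fin n → ℝ) = x i := by
      simp [dotProduct, Pi.single_apply, Finset.sum_ite_eq']
    rw [h1, h2] at h
    linarith
  have hsumu : (∑ i, u i) = (S.card : ℝ) := by
    simp only [hu]
    rw [Finset.sum_ite_mem, Finset.univ_inter, Finset.sum_const, nsmul_eq_mul, mul_one]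
  refine ⟨u, Matrix.vecMulVec u u, Matrix.vecMulVec x u, ⟨hsym, symm_vmv u, hsum, hsumu,
    hxu, hx, ?_, hrow, ?_, ?_, ?_, ?_, ?_, ?_, hX, ?_, ?_⟩, psd_big_of_sub hsym hpsd⟩
  · -- U i i = u i
    intro i
    simp only [Matrix.vecMulVec_apply, hu]
    split <;> norm_num
  · -- column sums of R
    intro j
    simp only [Matrix.vecMulVec_apply, ← Finset.sum_mul, hsum, one_mul]
  · -- row sums of R
    intro i
    simp only [Matrix.vecMulVec_apply, ← Finset.mul_sum, hsumu]
    ring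
  · -- row sums of U
    intro i
    simp only [Matrix.vecMulVec_apply, ← Finset.mul_sum, hsumu]
    ring
  · -- 0 ≤ X i j - R j i - R i j + U i j
    intro i j
    show (0:ℝ) ≤ X i j - Matrix.vecMulVec x u j i - Matrix.vecMulVec x u i j
      + Matrix.vecMulVec u u i j
    simp only [Matrix.vecMulVec_apply]
    by_cases hi : i ∈ S <;> by_cases hj : j ∈ S
    · have hui : u i = 1 := by simp [hu, hi]
      have huj : u j = 1 := by simp [hu, hj]
      rw [hui, huj]; norm_num
      by_cases hij : i = j
      · subst hij
        have := hXdiag i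
        nlinarith [this, sq_nonneg (x i - 1)]
      · have hpair : x i + x j ≤ 1 := by
          rw [← hsum]
          have : x i + x j = ∑ k ∈ ({i, j} : Finset (Fin n)), x k := by
            rw [Finset.sum_pair hij]
          rw [this]
          exact Finset.sum_le_sum_of_subset_of_nonneg (Finset.subset_univ _)
            (fun k _ _ => hx k)
        have := hX i j
        nlinarith
    · have huj : u j = 0 := by simp [hu, hj]
      have hxj : x j = 0 := hxz j hj
      have hXij : X i j = 0 := by rw [hXsymm j i]; exact hXrow0 j hxj i
      rw [huj, hxj, hXij]; norm_num
    · have hui : u i = 0 := by simp [hu, hi]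
      have hxi : x i = 0 := hxz i hi
      have hXij : X i j = 0 := hXrow0 i hxi j
      rw [hui, hxi, hXij]; norm_num
    · have hui : u i = 0 := by simp [hu, hi]
      have huj : u j = 0 := by simp [hu, hj]
      have hxi : x i = 0 := hxz i hi
      have hXij : X i j = 0 := hXrow0 i hxi j
      rw [hui, huj, hxi, hXij]; norm_num
  · -- X i j - R j i ≤ 0
    intro i j
    show X i j - Matrix.vecMulVec x u j i ≤ 0
    simp only [Matrix.vecMulVec_apply]
    by_cases hi : i ∈ S
    · have hui : u i = 1 := by simp [hu, hi]
      rw [hui, mul_one]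
      linarith [hXle i j]
    · have hui : u i = 0 := by simp [hu, hi]
      have hXij : X i j = 0 := hXrow0 i (hxz i hi) j
      rw [hui, hXij, mul_zero]; norm_num
  · -- R i j - U i j ≤ 0
    intro i j
    simp only [Matrix.vecMulVec_apply]
    by_cases hj : j ∈ S
    · have huj : u j = 1 := by simp [hu, hj]
      rw [huj, mul_one, mul_one]
      linarith [hxu i]
    · have huj : u j = 0 := by simp [hu, hj]
      rw [huj, mul_zero, mul_zero]; norm_num
  · -- 0 ≤ R i j
    intro i j
    simp only [Matrix.vecMulVec_apply]
    exact mul_nonneg (hx i) (hu0 j)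
  · -- 0 ≤ U i j
    intro i j
    simp only [Matrix.vecMulVec_apply]
    exact mul_nonneg (hu0 i) (hu0 j)

lemma proj_subset (ρ : ℕ) : FR3proj n ρ ⊆ FR3 n := by
  rintro p ⟨u, U, R, ⟨hXs, hUs, hsx, hsu, hxu, hx0, hUd, hXr, hRc, hRr, hUr,
    h12, h13, h14, hX0, hR0, hU0⟩, hpsd⟩
  exact ⟨hXs, hsx, hXr, hx0, hX0, psd_sub_of_big hXs hpsd⟩

end scratch3
theorem stmt15 {n : ℕ} (hn : 0 < n) (Q : Matrix (Fin n) (Fin n) ℝ) (hQ : Q.IsSymm) :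
    (∀ ρ : ℕ, 2 ≤ ρ → ρ ≤ n →
      (∃ p ∈ FR3 n, (∀ q ∈ FR3 n, ip Q p.2 ≤ ip Q q.2) ∧ sparsity p.1 ≤ ρ) →
        ellR3 Q = ellR3proj Q ρ) ∧
    (FR3proj n n = FR3 n ∧ ellR3 Q = ellR3proj Q n) := by
  classical
  have hset : FR3proj n n = FR3 n := by
    apply Set.Subset.antisymm (proj_subset n)
    intro p hp
    have h := lift_mem hp Finset.univ (fun i _ => Finset.mem_univ i)
    simpa [Finset.card_univ] using h
  refine ⟨?_, hset, by simp only [ellR3, ellR3proj, hset]⟩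
  intro ρ hρ2 hρn hopt
  obtain ⟨p, hp, hle, hsp⟩ := hopt
  have hcard0 : {i | p.1 i ≠ 0}.toFinset.card ≤ ρ := by
    rwa [← Set.ncard_eq_toFinset_card'] 
  obtain ⟨S, hsub, -, hcard⟩ := Finset.exists_subsuperset_card_eq
    (Finset.subset_univ {i | p.1 i ≠ 0}.toFinset) hcard0 (by simpa using hρn)
  have hS : ∀ i, p.1 i ≠ 0 → i ∈ S := fun i hi => hsub (by simpa using hi)
  have hmem : p ∈ FR3proj n ρ := hcard ▸ lift_mem hp S hS
  have hbdd := bddBelow_FR3 (n := n) Q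
  have himg : ((fun p => ip Q p.2) '' FR3proj n ρ) ⊆ ((fun p => ip Q p.2) '' FR3 n) :=
    Set.image_mono (proj_subset ρ)
  have h1 : sInf ((fun p => ip Q p.2) '' FR3 n) = ip Q p.2 :=
    IsLeast.csInf_eq ⟨⟨p, hp, rfl⟩, by rintro r ⟨q, hq, rfl⟩; exact hle q hq⟩
  have h2 : sInf ((fun p => ip Q p.2) '' FR3proj n ρ) ≤ ip Q p.2 :=
    csInf_le (hbdd.mono himg) ⟨p, hmem, rfl⟩
  have h3 : sInf ((fun p => ip Q p.2) '' FR3 n) ≤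
      sInf ((fun p => ip Q p.2) '' FR3proj n ρ) :=
    csInf_le_csInf hbdd ⟨_, ⟨p, hmem, rfl⟩⟩ himg
  simp only [ellR3, ellR3proj]
  linarith

end
end

section
/- Let ρ ∈ {1,…,n} and let (x,u,X,U,R) ∈ ℝ^n × ℝ^n × S^n × S^n × ℝ^{n×n} be R3(ρ)-feasible. Then for every i ∈ {1,…,n}, (ρ − 2)u_i + 2R_{ii} + (1 − ρ)x_i − X_{ii} ≥ 0. -/
open Matrix BigOperators

noncomputable section

theorem stmt16 {n : ℕ} (ρ : ℕ) (h1 : 1 ≤ ρ) (h2 : ρ ≤ n) (x u : Fin n → ℝ)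
    (X U R : Matrix (Fin n) (Fin n) ℝ) (hfeas : R3Feasible ρ x u X U R) :
    ∀ i, 0 ≤ ((ρ : ℝ) - 2) * u i + 2 * R i i + (1 - (ρ : ℝ)) * x i - X i i := by
  intro i
  obtain ⟨⟨hXs, hUs, hx1, huρ, hxu, hx0, hUd, hXr, hRc, hRr, hUr, hpos, _, _, _, _, _⟩, _⟩ :=
    hfeas
  have key : 0 ≤ ∑ j ∈ Finset.univ.erase i, (X i j - R j i - R i j + U i j) :=
    Finset.sum_nonneg fun j _ => hpos i j
  have hsplit : ∑ j ∈ Finset.univ.erase i, (X i j - R j i - R i j + U i j)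
      = (∑ j ∈ Finset.univ.erase i, X i j) - (∑ j ∈ Finset.univ.erase i, R j i)
        - (∑ j ∈ Finset.univ.erase i, R i j) + (∑ j ∈ Finset.univ.erase i, U i j) := by
    simp [Finset.sum_add_distrib, Finset.sum_sub_distrib]
  have e1 : ∑ j ∈ Finset.univ.erase i, X i j = (∑ j, X i j) - X i i :=
    Finset.sum_erase_eq_sub (Finset.mem_univ i)
  have e2 : ∑ j ∈ Finset.univ.erase i, R j i = (∑ j, R j i) - R i i :=
    Finset.sum_erase_eq_sub (Finset.mem_univ i)
  have e3 : ∑ j ∈ Finset.univ.erase i, R i j = (∑ j, R i j) - R i i :=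
    Finset.sum_erase_eq_sub (Finset.mem_univ i)
  have e4 : ∑ j ∈ Finset.univ.erase i, U i j = (∑ j, U i j) - U i i :=
    Finset.sum_erase_eq_sub (Finset.mem_univ i)
  rw [hsplit, e1, e2, e3, e4, hXr i, hRc i, hRr i, hUr i, hUd i] at key
  linarith

end
end

section
/- The following inclusions hold: (1) for every ρ ∈ {2,…,⌊(n+1)/2⌋}, {(x, xxᵀ) : x ∈ F, ‖x‖₀ ≤ 2ρ − 1} ⊆ F^{R3}_ρ; (2) for every ρ ∈ {⌊(n+1)/2⌋ + 1,…,n}, {(x, xxᵀ) : x ∈ F} ⊆ F^{R3}_ρ; (3) for every ρ ∈ {2,…,⌊n/2⌋}, {(x, xxᵀ) : x ∈ G_ρ} ⊆ F^{R3}_ρ, where G_ρ := {x ∈ F : ‖x‖₀ > 2ρ − 1 and for all 1 ≤ i < j ≤ n with x_i x_j > 0, x_i x_j / (1 − x_i − x_j) ≤ (ρ − 1)(ρ − 2) / ((‖x‖₀ − 2)(‖x‖₀ − 2ρ + 1))}. -/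
open Matrix BigOperators

noncomputable section

section Aux
variable {n : ℕ}

lemma quad_vecMulVec {ι : Type*} [Fintype ι] (v y : ι → ℝ) :
    y ⬝ᵥ ((Matrix.vecMulVec v v) *ᵥ y) = (v ⬝ᵥ y) ^ 2 := by
  simp only [Matrix.mulVec, Matrix.vecMulVec_apply, dotProduct, pow_two]
  rw [Finset.sum_mul_sum]
  apply Finset.sum_congr rfl; intro i _
  rw [Finset.mul_sum]
  apply Finset.sum_congr rfl; intro j _
  ring

lemma posSemidef_vecMulVec_self {ι : Type*} [Fintype ι] (v : ι → ℝ) :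
    (Matrix.vecMulVec v v).PosSemidef := by
  refine Matrix.posSemidef_iff_dotProduct_mulVec.mpr ⟨?_, ?_⟩
  · ext i j
    simp [Matrix.vecMulVec_apply, Matrix.conjTranspose_apply, mul_comm]
  · intro y
    rw [star_trivial, quad_vecMulVec]
    positivity

lemma posSemidef_embed {M : Matrix (Fin n) (Fin n) ℝ} (hM : M.PosSemidef) :
    (Matrix.fromBlocks (0 : Matrix Unit Unit ℝ) 0 0
      (Matrix.fromBlocks (0 : Matrix (Fin n) (Fin n) ℝ) 0 0 M)).PosSemidef := by
  refine Matrix.posSemidef_iff_dotProduct_mulVec.mpr ⟨?_, ?_⟩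
  · rw [Matrix.IsHermitian, Matrix.fromBlocks_conjTranspose, Matrix.fromBlocks_conjTranspose]
    have h := hM.1
    rw [Matrix.IsHermitian, Matrix.conjTranspose_eq_transpose_of_trivial] at h
    simp [h]
  · intro y
    rw [star_trivial]
    have hy : y = Sum.elim (y ∘ Sum.inl)
        (Sum.elim (y ∘ Sum.inr ∘ Sum.inl) (y ∘ Sum.inr ∘ Sum.inr)) := by
      funext k
      rcases k with k | k
      · rfl
      rcases k with k | k <;> rfl
    rw [hy, Matrix.fromBlocks_mulVec, Matrix.fromBlocks_mulVec]
    simp only [Matrix.zero_mulVec, add_zero, zero_add, sumElim_dotProduct_sumElim]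
    have := hM.dotProduct_mulVec_nonneg (y ∘ Sum.inr ∘ Sum.inr)
    rw [star_trivial] at this
    simpa using this

end Aux


def lapM {n : ℕ} (w : Matrix (Fin n) (Fin n) ℝ) : Matrix (Fin n) (Fin n) ℝ :=
  Matrix.of fun i j => (if i = j then (∑ k, w i k) else 0) - w i j

section Aux2
variable {n : ℕ}

lemma lapM_apply (w : Matrix (Fin n) (Fin n) ℝ) (i j : Fin n) :
    lapM w i j = (if i = j then (∑ k, w i k) else 0) - w i j := rfl

lemma lapM_rowsum (w : Matrix (Fin n) (Fin n) ℝ) (i : Fin n) : ∑ j, lapM w i j = 0 := by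
  simp [lapM_apply, Finset.sum_sub_distrib, Finset.sum_ite_eq]

lemma lapM_diag (w : Matrix (Fin n) (Fin n) ℝ) (i : Fin n) (hw : w i i = 0) :
    lapM w i i = ∑ k, w i k := by
  simp [lapM_apply, hw]

lemma lapM_posSemidef {w : Matrix (Fin n) (Fin n) ℝ} (hsymm : ∀ i j, w i j = w j i)
    (hnn : ∀ i j, 0 ≤ w i j) : (lapM w).PosSemidef := by
  refine Matrix.posSemidef_iff_dotProduct_mulVec.mpr ⟨?_, ?_⟩
  · rw [Matrix.IsHermitian, Matrix.conjTranspose_eq_transpose_of_trivial]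
    ext i j
    by_cases h : i = j
    · subst h; rfl
    · simp only [Matrix.transpose_apply, lapM_apply, if_neg h, if_neg (Ne.symm h)]
      rw [hsymm i j]
  · intro y
    rw [star_trivial]
    have hmv : ∀ i, (lapM w *ᵥ y) i = (∑ k, w i k) * y i - ∑ j, w i j * y j := by
      intro i
      simp [Matrix.mulVec, dotProduct, lapM_apply, sub_mul, Finset.sum_sub_distrib,
        Finset.sum_ite_eq]
    have hL : y ⬝ᵥ (lapM w *ᵥ y)
        = (∑ i, (∑ k, w i k) * y i ^ 2) - ∑ i, ∑ j, w i j * y i * y j := by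
      simp only [dotProduct, hmv, mul_sub]
      rw [Finset.sum_sub_distrib]
      congr 1
      · exact Finset.sum_congr rfl fun i _ => by ring
      · exact Finset.sum_congr rfl fun i _ => by
          rw [Finset.mul_sum]; exact Finset.sum_congr rfl fun j _ => by ring
    have hswap : ∑ i, ∑ j, w i j * y j ^ 2 = ∑ i, (∑ k, w i k) * y i ^ 2 := by
      rw [Finset.sum_comm]
      exact Finset.sum_congr rfl fun i _ => by
        rw [Finset.sum_mul]
        exact Finset.sum_congr rfl fun j _ => by rw [hsymm j i]
    have hpull : ∑ i, ∑ j, w i j * y i ^ 2 = ∑ i, (∑ k, w i k) * y i ^ 2 :=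
      Finset.sum_congr rfl fun i _ => by rw [Finset.sum_mul]
    have key : 2 * (y ⬝ᵥ (lapM w *ᵥ y)) = ∑ i, ∑ j, w i j * (y i - y j) ^ 2 := by
      have e1 : ∑ i, ∑ j, w i j * (y i - y j) ^ 2
          = ∑ i, ((∑ j, w i j * y i ^ 2) + (∑ j, w i j * y j ^ 2)
              - 2 * ∑ j, w i j * y i * y j) := by
        refine Finset.sum_congr rfl fun i _ => ?_
        rw [Finset.mul_sum, ← Finset.sum_add_distrib, ← Finset.sum_sub_distrib]
        exact Finset.sum_congr rfl fun j _ => by ring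
      rw [hL, e1]
      rw [Finset.sum_sub_distrib, Finset.sum_add_distrib]
      have e2 : ∑ i, 2 * ∑ j, w i j * y i * y j = 2 * ∑ i, ∑ j, w i j * y i * y j := by
        rw [Finset.mul_sum]
      rw [e2, hswap, hpull]
      ring
    have hnn2 : 0 ≤ ∑ i, ∑ j, w i j * (y i - y j) ^ 2 :=
      Finset.sum_nonneg fun i _ => Finset.sum_nonneg fun j _ =>
        mul_nonneg (hnn i j) (sq_nonneg _)
    linarith [key, hnn2]

end Aux2


section Master
variable {n : ℕ}

lemma master {ρ : ℕ} (x u : Fin n → ℝ) (M : Matrix (Fin n) (Fin n) ℝ)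
    (hxs : (∑ i, x i) = 1) (hx0 : ∀ i, 0 ≤ x i)
    (hus : (∑ i, u i) = (ρ : ℝ)) (hxu : ∀ i, x i ≤ u i) (hu1 : ∀ i, u i ≤ 1)
    (hM : M.PosSemidef) (hMd : ∀ i, M i i = u i * (1 - u i))
    (hMr : ∀ i, (∑ j, M i j) = 0)
    (hMlb : ∀ i j, i ≠ j → M i j ≤ 0)
    (hMub : ∀ i j, i ≠ j → -((u i - x i) * (u j - x j)) ≤ M i j) :
    R3Feasible ρ x u (Matrix.vecMulVec x x) (Matrix.vecMulVec u u + M) (Matrix.vecMulVec x u) := by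
  have hu0 : ∀ i, 0 ≤ u i := fun i => le_trans (hx0 i) (hxu i)
  have hx1 : ∀ i, x i ≤ 1 := by
    intro i
    calc x i ≤ ∑ j, x j := Finset.single_le_sum (fun j _ => hx0 j) (Finset.mem_univ i)
    _ = 1 := hxs
  have hMsymm : ∀ i j, M i j = M j i := by
    intro i j
    have h := hM.1
    rw [Matrix.IsHermitian, Matrix.conjTranspose_eq_transpose_of_trivial] at h
    exact (congrFun (congrFun h i) j).symm
  -- key entrywise inequality : R ≤ U off-diagonal chain
  have hRU : ∀ i j, x i * u j ≤ u i * u j + M i j := by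
    intro i j
    by_cases h : i = j
    · subst h
      rw [hMd i]
      nlinarith [hx1 i, hu0 i, hxu i]
    · have h1 := hMub i j h
      nlinarith [mul_nonneg (sub_nonneg.2 (hxu i)) (hx0 j), hu0 j, hxu i]
  refine ⟨⟨?_, ?_, hxs, hus, hxu, hx0, ?_, ?_, ?_, ?_, ?_, ?_, ?_, ?_, ?_, ?_, ?_⟩, ?_⟩
  · -- X symm
    ext i j
    simp [Matrix.vecMulVec_apply, Matrix.IsSymm, mul_comm]
  · -- U symm
    ext i j
    simp only [Matrix.transpose_apply, Matrix.add_apply, Matrix.vecMulVec_apply]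
    rw [hMsymm j i, mul_comm]
  · -- U diag
    intro i
    simp only [Matrix.add_apply, Matrix.vecMulVec_apply, hMd i]
    ring
  · -- X row sums
    intro i
    simp only [Matrix.vecMulVec_apply, ← Finset.mul_sum, hxs, mul_one]
  · -- R col sums
    intro j
    simp only [Matrix.vecMulVec_apply, ← Finset.sum_mul, hxs, one_mul]
  · -- R row sums
    intro i
    simp only [Matrix.vecMulVec_apply, ← Finset.mul_sum, hus]
    ring
  · -- U row sums
    intro i
    simp only [Matrix.add_apply, Matrix.vecMulVec_apply, Finset.sum_add_distrib, hMr i,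
      ← Finset.mul_sum, hus, add_zero]
    ring
  · -- X - Rᵀ - R + U ≥ 0
    intro i j
    simp only [Matrix.add_apply, Matrix.vecMulVec_apply]
    by_cases h : i = j
    · subst h
      rw [hMd i]
      nlinarith [sq_nonneg (u i - x i), hu0 i, hu1 i]
    · have h1 := hMub i j h
      nlinarith
  · -- X ≤ Rᵀ
    intro i j
    simp only [Matrix.vecMulVec_apply]
    nlinarith [hx0 j, hxu i]
  · -- R ≤ U
    intro i j
    simp only [Matrix.add_apply, Matrix.vecMulVec_apply]
    linarith [hRU i j]
  · -- X ≥ 0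
    intro i j
    exact mul_nonneg (hx0 i) (hx0 j)
  · -- R ≥ 0
    intro i j
    exact mul_nonneg (hx0 i) (hu0 j)
  · -- U ≥ 0
    intro i j
    calc (0:ℝ) ≤ x i * u j := mul_nonneg (hx0 i) (hu0 j)
    _ ≤ _ := hRU i j
  · -- PSD
    have hdecomp : bigMat x u (Matrix.vecMulVec x x) (Matrix.vecMulVec u u + M)
        (Matrix.vecMulVec x u)
        = Matrix.vecMulVec (Sum.elim (fun _ => (1:ℝ)) (Sum.elim x u))
            (Sum.elim (fun _ => (1:ℝ)) (Sum.elim x u))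
          + Matrix.fromBlocks (0 : Matrix Unit Unit ℝ) 0 0
              (Matrix.fromBlocks (0 : Matrix (Fin n) (Fin n) ℝ) 0 0 M) := by
      ext k l
      rcases k with k | k
      · rcases l with l | l
        · simp [bigMat, Matrix.vecMulVec_apply]
        · rcases l with l | l <;> simp [bigMat, Matrix.vecMulVec_apply]
      · rcases k with k | k <;> rcases l with l | l
        · simp [bigMat, Matrix.vecMulVec_apply]
        · rcases l with l | l <;>
            simp [bigMat, Matrix.vecMulVec_apply]
        · simp [bigMat, Matrix.vecMulVec_apply, mul_comm]
        · rcases l with l | l <;>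
            simp [bigMat, Matrix.vecMulVec_apply, mul_comm]
    rw [hdecomp]
    exact (posSemidef_vecMulVec_self _).add (posSemidef_embed hM)

end Master


section LemB
variable {n : ℕ}

lemma sparsity_eq_card (x : Fin n → ℝ) :
    sparsity x = (Finset.univ.filter fun i => x i ≠ 0).card := by
  classical
  rw [sparsity, Set.ncard_eq_toFinset_card']
  congr 1
  ext i
  simp

lemma pair_sum_le_one {x : Fin n → ℝ} (hxs : (∑ i, x i) = 1) (hx0 : ∀ i, 0 ≤ x i)
    {i j : Fin n} (hij : i ≠ j) : x i + x j ≤ 1 := by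
  have h1 : ({i, j} : Finset (Fin n)).sum x ≤ Finset.univ.sum x :=
    Finset.sum_le_sum_of_subset_of_nonneg (Finset.subset_univ _) (fun k _ _ => hx0 k)
  rw [Finset.sum_pair hij] at h1
  linarith [hxs ▸ h1]

lemma keystep (sR ρR a b : ℝ)
    (hk : (sR - 2) * (sR - 2 * ρR + 1) * (a * b) ≤ (ρR - 1) * (ρR - 2) * (1 - a - b))
    (hxx : 0 ≤ (ρR - 1) * (ρR - 2) * (a * b)) :
    (sR - ρR) * (sR - ρR - 1) * (a * b) ≤ (ρR - 1) * (ρR - 2) * ((1 - a) * (1 - b)) := by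
  nlinarith [hk, hxx]

lemma lemB {ρ : ℕ} (x : Fin n → ℝ) (hxs : (∑ i, x i) = 1) (hx0 : ∀ i, 0 ≤ x i)
    (hρ2 : 2 ≤ ρ) (hρs : ρ < sparsity x)
    (hkey : ∀ i j, i ≠ j →
      ((sparsity x : ℝ) - 2) * ((sparsity x : ℝ) - 2 * (ρ : ℝ) + 1) * (x i * x j)
        ≤ ((ρ : ℝ) - 1) * ((ρ : ℝ) - 2) * (1 - x i - x j)) :
    (⟨x, Matrix.vecMulVec x x⟩ : (Fin n → ℝ) × Matrix (Fin n) (Fin n) ℝ) ∈ FR3proj n ρ := by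
  classical
  set sR : ℝ := (sparsity x : ℝ) with hsRdef
  set ρR : ℝ := (ρ : ℝ) with hρRdef
  have hs3 : 3 ≤ sparsity x := by omega
  have hsR3 : (3 : ℝ) ≤ sR := by rw [hsRdef]; exact_mod_cast hs3
  have hρR2 : (2 : ℝ) ≤ ρR := by rw [hρRdef]; exact_mod_cast hρ2
  have hρsR : ρR + 1 ≤ sR := by
    rw [hsRdef, hρRdef]
    exact_mod_cast hρs
  have h1 : (0 : ℝ) < sR - 1 := by linarith
  have h2 : (0 : ℝ) < sR - 2 := by linarith
  have h1' : sR - 1 ≠ 0 := ne_of_gt h1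
  have h2' : sR - 2 ≠ 0 := ne_of_gt h2
  set c : ℝ := (sR - ρR) / (sR - 1) with hc
  set β : ℝ := 1 - c with hβ
  set α : ℝ := c * β / (sR - 2) with hα
  set γ : ℝ := c ^ 2 - α with hγdef
  have hc0 : 0 ≤ c := div_nonneg (by linarith) (le_of_lt h1)
  have hβval : β = (ρR - 1) / (sR - 1) := by rw [hβ, hc]; field_simp; ring
  have hβ0 : 0 ≤ β := by
    rw [hβval]
    exact div_nonneg (by linarith) (le_of_lt h1)
  have hα0 : 0 ≤ α := div_nonneg (mul_nonneg hc0 hβ0) (le_of_lt h2)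
  have hγ : γ = (sR - ρR) * (sR - ρR - 1) / ((sR - 1) * (sR - 2)) := by
    rw [hγdef, hα, hβ, hc]; field_simp; ring
  have hγ0 : 0 ≤ γ := by
    rw [hγ]
    apply div_nonneg (mul_nonneg (by linarith) (by linarith)) (le_of_lt (mul_pos h1 h2))
  -- indicator and slack
  set χ : Fin n → ℝ := fun i => if x i ≠ 0 then 1 else 0 with hχ
  set t : Fin n → ℝ := fun i => χ i - x i with ht
  have hx1 : ∀ i, x i ≤ 1 := by
    intro i
    calc x i ≤ ∑ j, x j := Finset.single_le_sum (fun j _ => hx0 j) (Finset.mem_univ i)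
    _ = 1 := hxs
  have ht_zero : ∀ i, x i = 0 → t i = 0 := by
    intro i h
    simp [ht, hχ, h]
  have ht_ne : ∀ i, x i ≠ 0 → t i = 1 - x i := by
    intro i h
    simp [ht, hχ, h]
  have ht0 : ∀ i, 0 ≤ t i := by
    intro i
    by_cases h : x i = 0
    · rw [ht_zero i h]
    · rw [ht_ne i h]; linarith [hx1 i]
  have hsumχ : (∑ i, χ i) = sR := by
    rw [hχ, hsRdef, sparsity_eq_card]
    rw [Finset.sum_boole]
  have hsumt : (∑ i, t i) = sR - 1 := by
    rw [ht]
    rw [Finset.sum_sub_distrib, hsumχ, hxs]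
  -- the construction
  set u : Fin n → ℝ := fun i => x i + β * t i with hu
  set w : Matrix (Fin n) (Fin n) ℝ :=
    Matrix.of (fun i j => if i = j then 0 else α * (t i * t j) + γ * (x i * x j)) with hw
  have hwapp : ∀ i j, w i j = if i = j then 0 else α * (t i * t j) + γ * (x i * x j) :=
    fun i j => rfl
  have hwdiag : ∀ i, w i i = 0 := fun i => by rw [hwapp]; simp
  have hwsymm : ∀ i j, w i j = w j i := by
    intro i j
    rw [hwapp, hwapp]
    by_cases h : i = j
    · subst h; rfl
    · rw [if_neg h, if_neg (Ne.symm h)]; ring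
  have hw0 : ∀ i j, 0 ≤ w i j := by
    intro i j
    rw [hwapp]
    by_cases h : i = j
    · rw [if_pos h]
    · rw [if_neg h]
      exact add_nonneg (mul_nonneg hα0 (mul_nonneg (ht0 i) (ht0 j)))
        (mul_nonneg hγ0 (mul_nonneg (hx0 i) (hx0 j)))
  have hrow : ∀ i, (∑ k, w i k) = α * (t i * (sR - 1 - t i)) + γ * (x i * (1 - x i)) := by
    intro i
    have e1 : ∀ k, w i k = (α * (t i * t k) + γ * (x i * x k))
        - (if i = k then α * (t i * t k) + γ * (x i * x k) else 0) := by
      intro k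
      rw [hwapp]
      by_cases h : i = k
      · subst h; simp
      · simp [h]
    simp only [e1]
    rw [Finset.sum_sub_distrib, Finset.sum_ite_eq]
    simp only [Finset.mem_univ, if_pos]
    rw [Finset.sum_add_distrib, ← Finset.mul_sum, ← Finset.mul_sum, ← Finset.mul_sum,
      ← Finset.mul_sum, hsumt, hxs]
    ring
  refine ⟨u, Matrix.vecMulVec u u + lapM w, Matrix.vecMulVec x u, ?_⟩
  apply master x u (lapM w) hxs hx0
  · -- sum u = ρ
    rw [hu]
    simp only []
    rw [Finset.sum_add_distrib, ← Finset.mul_sum, hsumt, hxs, hβval]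
    field_simp
    rw [hρRdef]; ring
  · -- x ≤ u
    intro i
    rw [hu]
    have := mul_nonneg hβ0 (ht0 i)
    simp only []
    linarith
  · -- u ≤ 1
    intro i
    rw [hu]
    simp only []
    by_cases h : x i = 0
    · rw [ht_zero i h, h]; linarith
    · rw [ht_ne i h]
      have hx1i := hx1 i
      have hci : c * (1 - x i) ≥ 0 := mul_nonneg hc0 (by linarith)
      rw [hβ]
      nlinarith
  · -- PSD of lapM
    exact lapM_posSemidef hwsymm hw0
  · -- diag
    intro i
    rw [lapM_diag w i (hwdiag i), hrow i]
    by_cases h : x i = 0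
    · rw [ht_zero i h, h, hu]
      simp [ht_zero i h, h]
    · rw [ht_ne i h, hu]
      simp only []
      rw [ht_ne i h]
      have hαeq : α * (sR - 2) = c * (1 - c) := by rw [hα, hβ]; field_simp
      rw [hγdef, hβ]
      linear_combination (1 - x i) * hαeq
  · -- row sums
    exact lapM_rowsum w
  · -- off diag ≤ 0
    intro i j hij
    rw [lapM_apply, if_neg hij]
    linarith [hw0 i j]
  · -- lower bound
    intro i j hij
    rw [lapM_apply, if_neg hij, hwapp, if_neg hij]
    have hui : u i - x i = β * t i := by rw [hu]; ring
    have huj : u j - x j = β * t j := by rw [hu]; ring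
    rw [hui, huj]
    have hclaim : γ * (x i * x j) ≤ (β ^ 2 - α) * (t i * t j) := by
      by_cases hxi : x i = 0
      · rw [hxi, ht_zero i hxi]
        simp
      by_cases hxj : x j = 0
      · rw [hxj, ht_zero j hxj]
        simp
      rw [ht_ne i hxi, ht_ne j hxj]
      have hA : β ^ 2 - α = (ρR - 1) * (ρR - 2) / ((sR - 1) * (sR - 2)) := by
        rw [hα, hβval, hc]
        field_simp
        ring
      have hγ' := hγ
      have hD : (0 : ℝ) < (sR - 1) * (sR - 2) := mul_pos h1 h2
      rw [hA, hγ']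
      rw [div_mul_eq_mul_div, div_mul_eq_mul_div, div_le_div_iff₀ hD hD]
      have hk := hkey i j hij
      have hxx : 0 ≤ (ρR - 1) * (ρR - 2) * (x i * x j) :=
        mul_nonneg (mul_nonneg (by linarith) (by linarith)) (mul_nonneg (hx0 i) (hx0 j))
      have hmain : (sR - ρR) * (sR - ρR - 1) * (x i * x j)
          ≤ (ρR - 1) * (ρR - 2) * ((1 - x i) * (1 - x j)) := keystep sR ρR _ _ hk hxx
      exact mul_le_mul_of_nonneg_right hmain (le_of_lt hD)
    nlinarith [hclaim]

end LemB


section Final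
variable {n : ℕ}

lemma lemA {ρ : ℕ} (x : Fin n → ℝ) (hxs : (∑ i, x i) = 1) (hx0 : ∀ i, 0 ≤ x i)
    (hsρ : sparsity x ≤ ρ) (hρn : ρ ≤ n) :
    (⟨x, Matrix.vecMulVec x x⟩ : (Fin n → ℝ) × Matrix (Fin n) (Fin n) ℝ) ∈ FR3proj n ρ := by
  classical
  have hx1 : ∀ i, x i ≤ 1 := by
    intro i
    calc x i ≤ ∑ j, x j := Finset.single_le_sum (fun j _ => hx0 j) (Finset.mem_univ i)
    _ = 1 := hxs
  have hcard : (Finset.univ.filter fun i => x i ≠ 0).card ≤ ρ := by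
    rw [← sparsity_eq_card]; exact hsρ
  obtain ⟨T, hST, hTcard⟩ := Finset.exists_superset_card_eq hcard (by simpa using hρn)
  set u : Fin n → ℝ := fun i => if i ∈ T then 1 else 0 with hu
  have hxu : ∀ i, x i ≤ u i := by
    intro i
    rw [hu]
    by_cases h : i ∈ T
    · simpa [h] using hx1 i
    · have hxi : x i = 0 := by
        by_contra hne
        exact h (hST (Finset.mem_filter.2 ⟨Finset.mem_univ i, hne⟩))
      simp [h, hxi]
  have hu01 : ∀ i, u i = 0 ∨ u i = 1 := by
    intro i
    rw [hu]
    by_cases h : i ∈ T <;> simp [h]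
  refine ⟨u, Matrix.vecMulVec u u + 0, Matrix.vecMulVec x u, ?_⟩
  apply master x u 0 hxs hx0
  · rw [hu]
    simp only []
    rw [Finset.sum_boole]
    have : Finset.univ.filter (fun i => i ∈ T) = T := by ext i; simp
    rw [this, hTcard]
  · exact hxu
  · intro i
    rcases hu01 i with h | h <;> rw [h] <;> norm_num
  · exact Matrix.PosSemidef.zero
  · intro i
    rcases hu01 i with h | h <;> simp [h]
  · intro i; simp
  · intro i j _; simp
  · intro i j _
    simp only [Matrix.zero_apply]
    have := mul_nonneg (sub_nonneg.2 (hxu i)) (sub_nonneg.2 (hxu j))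
    linarith

lemma lemAB {ρ : ℕ} (x : Fin n → ℝ) (hxs : (∑ i, x i) = 1) (hx0 : ∀ i, 0 ≤ x i)
    (hρ2 : 2 ≤ ρ) (hρn : ρ ≤ n) (hs : sparsity x ≤ 2 * ρ - 1) :
    (⟨x, Matrix.vecMulVec x x⟩ : (Fin n → ℝ) × Matrix (Fin n) (Fin n) ℝ) ∈ FR3proj n ρ := by
  rcases le_or_gt (sparsity x) ρ with h | h
  · exact lemA x hxs hx0 h hρn
  · apply lemB x hxs hx0 hρ2 h
    intro i j hij
    have hs3 : 3 ≤ sparsity x := by omega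
    have hsR3 : (3 : ℝ) ≤ (sparsity x : ℝ) := by exact_mod_cast hs3
    have hupper : sparsity x + 1 ≤ 2 * ρ := by omega
    have hupperR : (sparsity x : ℝ) + 1 ≤ 2 * (ρ : ℝ) := by exact_mod_cast hupper
    have hρR2 : (2 : ℝ) ≤ (ρ : ℝ) := by exact_mod_cast hρ2
    have hxx : 0 ≤ x i * x j := mul_nonneg (hx0 i) (hx0 j)
    have hpair := pair_sum_le_one hxs hx0 hij
    have hL : ((sparsity x : ℝ) - 2) * ((sparsity x : ℝ) - 2 * (ρ : ℝ) + 1) * (x i * x j) ≤ 0 := by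
      have hab : ((sparsity x : ℝ) - 2) * ((sparsity x : ℝ) - 2 * (ρ : ℝ) + 1) ≤ 0 :=
        mul_nonpos_of_nonneg_of_nonpos (by linarith) (by linarith)
      exact mul_nonpos_of_nonpos_of_nonneg hab hxx
    have hR : 0 ≤ ((ρ : ℝ) - 1) * ((ρ : ℝ) - 2) * (1 - x i - x j) :=
      mul_nonneg (mul_nonneg (by linarith) (by linarith)) (by linarith)
    linarith

lemma sparsity_le (x : Fin n → ℝ) : sparsity x ≤ n := by
  rw [sparsity_eq_card]
  calc (Finset.univ.filter fun i => x i ≠ 0).card ≤ Finset.univ.card :=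
        Finset.card_filter_le _ _
  _ = n := by simp

end Final

theorem stmt18 {n : ℕ} (hn : 0 < n) :
    (∀ ρ : ℕ, 2 ≤ ρ → ρ ≤ (n + 1) / 2 →
      {p : (Fin n → ℝ) × Matrix (Fin n) (Fin n) ℝ |
        ∃ x, x ∈ simplexF n ∧ sparsity x ≤ 2 * ρ - 1 ∧
          p = (x, Matrix.vecMulVec x x)} ⊆ FR3proj n ρ) ∧
    (∀ ρ : ℕ, (n + 1) / 2 + 1 ≤ ρ → ρ ≤ n →
      {p : (Fin n → ℝ) × Matrix (Fin n) (Fin n) ℝ |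
        ∃ x, x ∈ simplexF n ∧ p = (x, Matrix.vecMulVec x x)} ⊆ FR3proj n ρ) ∧
    (∀ ρ : ℕ, 2 ≤ ρ → ρ ≤ n / 2 →
      {p : (Fin n → ℝ) × Matrix (Fin n) (Fin n) ℝ |
        ∃ x, x ∈ simplexF n ∧ 2 * ρ - 1 < sparsity x ∧
          (∀ i j : Fin n, i < j → 0 < x i * x j →
            x i * x j / (1 - x i - x j) ≤
              ((ρ : ℝ) - 1) * ((ρ : ℝ) - 2) /
                (((sparsity x : ℝ) - 2) * ((sparsity x : ℝ) - 2 * (ρ : ℝ) + 1))) ∧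
          p = (x, Matrix.vecMulVec x x)} ⊆ FR3proj n ρ) := by
  classical
  refine ⟨?_, ?_, ?_⟩
  · -- part 1
    intro ρ hρ2 hρle p hp
    obtain ⟨x, ⟨hxs, hx0⟩, hsp, hpeq⟩ := hp
    rw [hpeq]
    exact lemAB x hxs hx0 hρ2 (by omega) hsp
  · -- part 2
    intro ρ hρ1 hρn p hp
    obtain ⟨x, ⟨hxs, hx0⟩, hpeq⟩ := hp
    rw [hpeq]
    have hρ2 : 2 ≤ ρ := by omega
    have hsn := sparsity_le x
    exact lemAB x hxs hx0 hρ2 hρn (by omega)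
  · -- part 3
    intro ρ hρ2 hρle p hp
    obtain ⟨x, ⟨hxs, hx0⟩, hssp, hineq, hpeq⟩ := hp
    rw [hpeq]
    have hρs : ρ < sparsity x := by omega
    apply lemB x hxs hx0 hρ2 hρs
    intro i j hij
    have h2ρs : 2 * ρ ≤ sparsity x := by omega
    have h2ρsR : 2 * (ρ : ℝ) ≤ (sparsity x : ℝ) := by exact_mod_cast h2ρs
    have hρR2 : (2 : ℝ) ≤ (ρ : ℝ) := by exact_mod_cast hρ2
    have hD : (0 : ℝ) < ((sparsity x : ℝ) - 2) * ((sparsity x : ℝ) - 2 * (ρ : ℝ) + 1) :=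
      mul_pos (by linarith) (by linarith)
    have hxx : 0 ≤ x i * x j := mul_nonneg (hx0 i) (hx0 j)
    rcases eq_or_lt_of_le hxx with hxx0 | hxxpos
    · -- zero product case
      rw [← hxx0, mul_zero]
      have hpair := pair_sum_le_one hxs hx0 hij
      exact mul_nonneg (mul_nonneg (by linarith) (by linarith)) (by linarith)
    · -- positive product case
      have hxi : x i ≠ 0 := by
        intro h; rw [h, zero_mul] at hxxpos; exact lt_irrefl _ hxxpos
      have hxj : x j ≠ 0 := by
        intro h; rw [h, mul_zero] at hxxpos; exact lt_irrefl _ hxxpos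
      -- find a third support element
      set S := Finset.univ.filter (fun k => x k ≠ 0) with hS
      have hiS : i ∈ S := Finset.mem_filter.2 ⟨Finset.mem_univ i, hxi⟩
      have hjS : j ∈ S := Finset.mem_filter.2 ⟨Finset.mem_univ j, hxj⟩
      have hScard : 3 ≤ S.card := by
        rw [hS, ← sparsity_eq_card]; omega
      have hne : (S \ {i, j}).Nonempty := by
        rw [← Finset.card_pos]
        have h1 := Finset.le_card_sdiff ({i, j} : Finset (Fin n)) S
        have h2 : ({i, j} : Finset (Fin n)).card ≤ 2 := Finset.card_le_two
        omega
      obtain ⟨k, hk⟩ := hne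
      rw [Finset.mem_sdiff] at hk
      obtain ⟨hkS, hkij⟩ := hk
      have hki : k ≠ i := fun h => hkij (by simp [h])
      have hkj : k ≠ j := fun h => hkij (by simp [h])
      have hxk : 0 < x k := by
        rcases (hx0 k).lt_or_eq with h | h
        · exact h
        · exact absurd (Finset.mem_filter.1 hkS).2 (by rw [← h]; simp)
      have htriple : x i + x j + x k ≤ 1 := by
        have hsub : ({i, j, k} : Finset (Fin n)).sum x ≤ Finset.univ.sum x :=
          Finset.sum_le_sum_of_subset_of_nonneg (Finset.subset_univ _) (fun l _ _ => hx0 l)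
        rw [hxs] at hsub
        rw [Finset.sum_insert (by simp [hij, hki.symm]),
          Finset.sum_pair (fun h => hkj (h.symm))] at hsub
        linarith
      have hpos1 : (0 : ℝ) < 1 - x i - x j := by linarith
      have hmain : x i * x j * (((sparsity x : ℝ) - 2) * ((sparsity x : ℝ) - 2 * (ρ : ℝ) + 1))
          ≤ ((ρ : ℝ) - 1) * ((ρ : ℝ) - 2) * (1 - x i - x j) := by
        rcases hij.lt_or_gt with hlt | hlt
        · have h := hineq i j hlt hxxpos
          rw [div_le_div_iff₀ hpos1 hD] at h
          linarith
        · have h := hineq j i hlt (by linarith [hxxpos, mul_comm (x i) (x j)])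
          rw [div_le_div_iff₀ (by linarith : (0:ℝ) < 1 - x j - x i) hD] at h
          nlinarith [h]
      linarith [hmain]


end
end

section
/- For each ρ ∈ {1,…,n−1} and each x ∈ ℝ^n, if (x, xxᵀ) ∈ F^{R3}_ρ then (x, xxᵀ) ∈ F^{R3}_{ρ+1}; i.e., the sets of rank-one solutions of the projected SDP-RLT feasible sets are nested in ρ. -/
open Matrix BigOperators

noncomputable section

lemma bigMat_quad {n : ℕ} (x u : Fin n → ℝ) (X U R : Matrix (Fin n) (Fin n) ℝ)
    (a : ℝ) (b c : Fin n → ℝ) :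
    (Sum.elim (fun _ => a) (Sum.elim b c)) ⬝ᵥ
      (bigMat x u X U R) *ᵥ (Sum.elim (fun _ => a) (Sum.elim b c)) =
    a * a + 2 * a * (∑ i, x i * b i) + 2 * a * (∑ i, u i * c i)
      + (∑ i, ∑ j, b i * X i j * b j) + 2 * (∑ i, ∑ j, b i * R i j * c j)
      + (∑ i, ∑ j, c i * U i j * c j) := by
  simp only [dotProduct, Matrix.mulVec, bigMat, Matrix.fromBlocks, Fintype.sum_sum_type,
    Sum.elim_inl, Sum.elim_inr, Matrix.of_apply, Matrix.transpose_apply, dotProduct,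
    Matrix.fromBlocks_apply₁₁, Matrix.fromBlocks_apply₁₂, Matrix.fromBlocks_apply₂₁,
    Matrix.fromBlocks_apply₂₂]
  simp only [Finset.univ_unique, Finset.sum_singleton, Finset.sum_const, Finset.card_singleton,
    one_smul, one_mul, mul_add, add_mul, Finset.sum_add_distrib, Finset.mul_sum]
  rw [show (∑ i, ∑ j, c i * (R j i * b j)) = ∑ i, ∑ j, b i * (R i j * c j) from by
    rw [Finset.sum_comm]; exact Finset.sum_congr rfl fun i _ => Finset.sum_congr rfl fun j _ => by ring]
  have h1 : (∑ i, a * (x i * b i)) + ∑ i, b i * (x i * a) = ∑ i, 2 * a * (x i * b i) := by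
    rw [← Finset.sum_add_distrib]; exact Finset.sum_congr rfl fun i _ => by ring
  have h2 : (∑ i, a * (u i * c i)) + ∑ i, c i * (u i * a) = ∑ i, 2 * a * (u i * c i) := by
    rw [← Finset.sum_add_distrib]; exact Finset.sum_congr rfl fun i _ => by ring
  have h3 : (∑ i, ∑ j, b i * (X i j * b j)) = ∑ i, ∑ j, b i * X i j * b j :=
    Finset.sum_congr rfl fun i _ => Finset.sum_congr rfl fun j _ => by ring
  have h4 : (∑ i, ∑ j, b i * (R i j * c j)) + (∑ i, ∑ j, b i * (R i j * c j))
      = ∑ i, ∑ j, 2 * (b i * R i j * c j) := by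
    rw [← Finset.sum_add_distrib]
    refine Finset.sum_congr rfl fun i _ => ?_
    rw [← Finset.sum_add_distrib]
    exact Finset.sum_congr rfl fun j _ => by ring
  have h5 : (∑ i, ∑ j, c i * (U i j * c j)) = ∑ i, ∑ j, c i * U i j * c j :=
    Finset.sum_congr rfl fun i _ => Finset.sum_congr rfl fun j _ => by ring
  linear_combination h1 + h2 + h3 + h4 + h5

lemma vec_decomp {n : ℕ} (z : Unit ⊕ (Fin n ⊕ Fin n) → ℝ) :
    z = Sum.elim (fun _ => z (Sum.inl ()))
      (Sum.elim (fun i => z (Sum.inr (Sum.inl i))) (fun i => z (Sum.inr (Sum.inr i)))) := by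
  funext p
  rcases p with p | p
  · rfl
  · rcases p with p | p <;> rfl

lemma bigMat_psd_of {n : ℕ} (x v : Fin n → ℝ) (V : Matrix (Fin n) (Fin n) ℝ)
    (hVsymm : V.IsSymm)
    (hV : ∀ c : Fin n → ℝ, (∑ i, v i * c i) ^ 2 ≤ ∑ i, ∑ j, c i * V i j * c j) :
    (bigMat x v (Matrix.vecMulVec x x) V (Matrix.vecMulVec x v)).PosSemidef := by
  refine Matrix.PosSemidef.of_dotProduct_mulVec_nonneg ?_ ?_
  · show _ᴴ = _
    ext p q
    rcases p with p | p | p <;> rcases q with q | q | q <;>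
      simp [bigMat, Matrix.conjTranspose_apply, Matrix.vecMulVec_apply, mul_comm] <;>
      exact (hVsymm.apply _ _)
  · intro z
    rw [star_trivial, vec_decomp z, bigMat_quad]
    set a := z (Sum.inl ()) with ha
    set b := fun i => z (Sum.inr (Sum.inl i)) with hb
    set c := fun i => z (Sum.inr (Sum.inr i)) with hc
    have hX : (∑ i, ∑ j, b i * (Matrix.vecMulVec x x) i j * b j) = (∑ i, x i * b i) ^ 2 := by
      calc (∑ i, ∑ j, b i * (Matrix.vecMulVec x x) i j * b j)
          = ∑ i, ∑ j, (x i * b i) * (x j * b j) := by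
            exact Finset.sum_congr rfl fun i _ => Finset.sum_congr rfl fun j _ => by
              simp [Matrix.vecMulVec_apply]; ring
        _ = (∑ i, x i * b i) * (∑ j, x j * b j) := by rw [Finset.sum_mul_sum]
        _ = (∑ i, x i * b i) ^ 2 := by ring
    have hR : (∑ i, ∑ j, b i * (Matrix.vecMulVec x v) i j * c j)
        = (∑ i, x i * b i) * (∑ i, v i * c i) := by
      calc (∑ i, ∑ j, b i * (Matrix.vecMulVec x v) i j * c j)
          = ∑ i, ∑ j, (x i * b i) * (v j * c j) := by
            exact Finset.sum_congr rfl fun i _ => Finset.sum_congr rfl fun j _ => by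
              simp [Matrix.vecMulVec_apply]; ring
        _ = (∑ i, x i * b i) * (∑ j, v j * c j) := by rw [Finset.sum_mul_sum]
    rw [hX, hR]
    have := hV c
    nlinarith [sq_nonneg (a + (∑ i, x i * b i) + (∑ i, v i * c i)), this]

set_option maxHeartbeats 1000000 in
theorem stmt19 {n : ℕ} (ρ : ℕ) (h1 : 1 ≤ ρ) (h2 : ρ ≤ n - 1) (x : Fin n → ℝ)
    (hx : (x, Matrix.vecMulVec x x) ∈ FR3proj n ρ) :
    (x, Matrix.vecMulVec x x) ∈ FR3proj n (ρ + 1) := by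
  simp only [FR3proj, Set.mem_setOf_eq] at hx ⊢
  obtain ⟨u, U, R, ⟨hR1, hPSD⟩⟩ := hx
  obtain ⟨hXsymm, hUsymm, hxsum, husum, hxu, hx0, hUdiag, hXrow, hRcol, hRrow, hUrow,
    hc1, hc2, hc3, hX0, hR0, hU0⟩ := hR1
  have hρn : ρ < n := by omega
  have hx1 : ∀ i, x i ≤ 1 := by
    intro i
    calc x i ≤ ∑ j, x j := Finset.single_le_sum (fun j _ => hx0 j) (Finset.mem_univ i)
      _ = 1 := hxsum
  have hu0 : ∀ i, 0 ≤ u i := fun i => (hUdiag i) ▸ hU0 i i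
  -- the quadratic form fact: for all c, (uᵀc)² ≤ cᵀUc
  have hQ : ∀ c : Fin n → ℝ, (∑ i, u i * c i) ^ 2 ≤ ∑ i, ∑ j, c i * U i j * c j := by
    intro c
    have h := hPSD.dotProduct_mulVec_nonneg (Sum.elim (fun _ => -(∑ i, u i * c i)) (Sum.elim 0 c))
    rw [star_trivial, bigMat_quad] at h
    simp only [Pi.zero_apply, mul_zero, zero_mul, Finset.sum_const_zero, add_zero, zero_add] at h
    nlinarith [h]
  rcases eq_or_lt_of_le (show ρ + 1 ≤ n by omega) with hcase | hcase
  · -- case ρ + 1 = n : take u' = 1, U' = all-ones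
    have hn : ((n : ℝ)) = (ρ : ℝ) + 1 := by exact_mod_cast hcase.symm
    refine ⟨(fun _ => 1), Matrix.of (fun _ _ => (1:ℝ)), Matrix.vecMulVec x (fun _ => 1), ?_, ?_⟩
    · refine ⟨hXsymm, ?_, hxsum, ?_, ?_, hx0, ?_, hXrow, ?_, ?_, ?_, ?_, ?_, ?_, ?_, ?_, ?_⟩
      · exact Matrix.ext fun i j => rfl
      · simp [hn]
      · exact fun i => hx1 i
      · intro i; rfl
      · intro j; simp [Matrix.vecMulVec_apply, hxsum]
      · intro i; simp [Matrix.vecMulVec_apply, ← Finset.sum_mul, hn]; try ring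
      · intro i; simp [hn]
      · intro i j
        simp only [Matrix.vecMulVec_apply, Matrix.of_apply]
        nlinarith [hx0 i, hx0 j, hx1 i, hx1 j]
      · intro i j
        simp only [Matrix.vecMulVec_apply, Matrix.of_apply]
        nlinarith [hx0 i, hx0 j, hx1 i, hx1 j]
      · intro i j
        simp only [Matrix.vecMulVec_apply, Matrix.of_apply]
        nlinarith [hx0 i, hx1 i]
      · intro i j; exact mul_nonneg (hx0 i) (hx0 j)
      · intro i j; simp [Matrix.vecMulVec_apply]; exact hx0 i
      · intro i j; norm_num
    · refine bigMat_psd_of x _ _ (Matrix.ext fun i j => rfl) ?_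
      intro c
      have : (∑ i, ∑ j, c i * (Matrix.of (fun _ _ => (1:ℝ))) i j * c j) = (∑ i, c i) ^ 2 := by
        calc (∑ i, ∑ j, c i * (Matrix.of (fun _ _ => (1:ℝ))) i j * c j)
            = ∑ i, ∑ j, c i * c j := by
              exact Finset.sum_congr rfl fun i _ => Finset.sum_congr rfl fun j _ => by simp
          _ = (∑ i, c i) * (∑ j, c j) := by rw [Finset.sum_mul_sum]
          _ = _ := by ring
      rw [this]
      simp [one_mul]
  · -- case ρ + 1 < n
    have hu1 : ∀ k, u k ≤ 1 := by
      intro k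
      have h := hQ (fun i => if i = k then 1 else 0)
      simp [Finset.sum_ite_eq', mul_ite, mul_zero, mul_one, ite_mul, zero_mul, one_mul,
        Finset.sum_ite_eq] at h
      nlinarith [hu0 k, h, hUdiag k]
    have hRxu : ∀ k j, R k j = x k * u j := by
      intro k j
      have key : ∀ ε : ℝ, 0 ≤ 2 * ε * (R k j - x k * u j) + ε ^ 2 * u j := by
        intro ε
        have h := hPSD.dotProduct_mulVec_nonneg (Sum.elim (fun _ => -x k)
          (Sum.elim (fun i => if i = k then 1 else 0) (fun i => if i = j then ε else 0)))
        rw [star_trivial, bigMat_quad] at h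
        simp [Finset.sum_ite_eq', mul_ite, mul_zero, mul_one, ite_mul, zero_mul, one_mul,
          Finset.sum_ite_eq, Matrix.vecMulVec_apply] at h
        rw [hUdiag j] at h
        nlinarith [h]
      have hj := hu0 j
      have hpos : (0:ℝ) < u j + 1 := by linarith
      have h1 := key (-(R k j - x k * u j) / (u j + 1))
      have hd2 : (R k j - x k * u j) ^ 2 ≤ 0 := by
        have e1 : 2 * (-(R k j - x k * u j) / (u j + 1)) * (R k j - x k * u j)
            + (-(R k j - x k * u j) / (u j + 1)) ^ 2 * u j
            = -((R k j - x k * u j) ^ 2 * (u j + 2)) / ((u j + 1) ^ 2) := by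
          field_simp
          ring
        rw [e1] at h1
        have hA := (le_div_iff₀ (by positivity : (0:ℝ) < (u j + 1) ^ 2)).mp h1
        nlinarith [hj, hA]
      have hd0 : R k j - x k * u j = 0 := by
        have := sq_nonneg (R k j - x k * u j)
        have h0 : (R k j - x k * u j) ^ 2 = 0 := le_antisymm hd2 this
        exact pow_eq_zero_iff (by norm_num) |>.mp h0
      linarith
    have hL : ∀ i j, x i * u j + x j * u i - x i * x j ≤ U i j := by
      intro i j
      have h := hc1 i j
      rw [hRxu j i, hRxu i j, Matrix.vecMulVec_apply] at h
      linarith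
    -- definitions
    set mR : ℝ := (n : ℝ) - (ρ : ℝ) with hmR
    have hm2 : (2:ℝ) ≤ mR := by
      rw [hmR]
      have : (ρ:ℝ) + 2 ≤ (n:ℝ) := by exact_mod_cast (by omega : ρ + 2 ≤ n)
      linarith
    have hmpos : (0:ℝ) < mR := by linarith
    set t : ℝ := 1 / mR with htdef
    have ht0 : 0 < t := by positivity
    have ht : t * mR = 1 := by rw [htdef]; field_simp
    have h12 : 0 ≤ 1 - 2 * t := by
      have h' : (2:ℝ) / mR ≤ 1 := (div_le_one hmpos).mpr (by linarith)
      have h'' : 2 * t = 2 / mR := by rw [htdef]; ring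
      linarith
    have hmR' : (∑ _i : Fin n, (1:ℝ)) - (ρ : ℝ) = mR := by
      simp [hmR]
    -- the new variables
    set u' : Fin n → ℝ := fun i => u i + t * (1 - u i) with hu'def
    set U' : Matrix (Fin n) (Fin n) ℝ := Matrix.of (fun i j =>
      (1 - 2 * t) * U i j + t * (u i + u j) + (if i = j then t * (1 - u i) else 0)) with hU'def
    have husum' : (∑ i, u' i) = (ρ : ℝ) + 1 := by
      have e1 : (∑ i, (1 - u i)) = mR := by
        rw [Finset.sum_sub_distrib, husum, hmR']
      calc (∑ i, u' i) = ∑ i, (u i + t * (1 - u i)) := rfl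
        _ = (∑ i, u i) + t * ∑ i, (1 - u i) := by
            rw [Finset.sum_add_distrib, ← Finset.mul_sum]
        _ = (ρ : ℝ) + 1 := by rw [husum, e1, ht]
    have husum'' : (∑ i, u' i) = ((ρ + 1 : ℕ) : ℝ) := by rw [husum']; push_cast; ring
    have hu'x : ∀ i, x i ≤ u' i := by
      intro i
      have h1 := hxu i; have h2 := hu1 i
      simp only [hu'def]
      nlinarith [ht0.le]
    have hu'0 : ∀ i, 0 ≤ u' i := by
      intro i
      have h1 := hu0 i; have h2 := hu1 i
      simp only [hu'def]
      nlinarith [ht0.le]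
    have hkey : ∀ i j, x i * u' j + x j * u' i - x i * x j ≤ U' i j := by
      intro i j
      simp only [hu'def, hU'def, Matrix.of_apply]
      by_cases hij : i = j
      · subst hij
        rw [if_pos rfl]
        nlinarith [mul_nonneg h12 (sub_nonneg.mpr (hL i i)),
          mul_nonneg (mul_nonneg ht0.le (sub_nonneg.mpr (hx1 i))) (sub_nonneg.mpr (hxu i)),
          mul_nonneg ht0.le (sub_nonneg.mpr (hu1 i))]
      · rw [if_neg hij]
        nlinarith [mul_nonneg h12 (sub_nonneg.mpr (hL i j)),
          mul_nonneg (mul_nonneg ht0.le (sub_nonneg.mpr (hx1 i))) (sub_nonneg.mpr (hxu j)),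
          mul_nonneg (mul_nonneg ht0.le (sub_nonneg.mpr (hx1 j))) (sub_nonneg.mpr (hxu i))]
    have hU'symm : U'.IsSymm := by
      refine Matrix.ext fun i j => ?_
      simp only [hU'def, Matrix.transpose_apply, Matrix.of_apply]
      by_cases hij : i = j
      · subst hij; ring
      · rw [if_neg hij, if_neg (fun h => hij h.symm), hUsymm.apply i j]
        ring
    refine ⟨u', U', Matrix.vecMulVec x u', ⟨hXsymm, hU'symm, hxsum, husum'', hu'x, hx0,
      ?_, hXrow, ?_, ?_, ?_, ?_, ?_, ?_, hX0, ?_, ?_⟩, ?_⟩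
    · -- diag
      intro i
      simp only [hU'def, hu'def, Matrix.of_apply, eq_self_iff_true, if_true]
      rw [hUdiag i]
      ring
    · -- R' column sums
      intro j
      simp only [Matrix.vecMulVec_apply]
      rw [← Finset.sum_mul, hxsum, one_mul]
    · -- R' row sums
      intro i
      simp only [Matrix.vecMulVec_apply]
      rw [← Finset.mul_sum, husum']
      push_cast
      ring
    · -- U' row sums
      intro i
      have e1 : (∑ j, U' i j)
          = (1 - 2 * t) * ((ρ:ℝ) * u i) + t * ((n:ℝ) * u i + (ρ:ℝ))
            + t * (1 - u i) := by
        calc (∑ j, U' i j)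
            = ∑ j, ((1 - 2 * t) * U i j + (t * u i + t * u j)
                + (if i = j then t * (1 - u i) else 0)) := by
              refine Finset.sum_congr rfl fun j _ => ?_
              simp only [hU'def, Matrix.of_apply]; ring
          _ = (∑ j, (1 - 2 * t) * U i j) + ((∑ _j : Fin n, t * u i) + (∑ j, t * u j))
              + (∑ j, if i = j then t * (1 - u i) else 0) := by
              rw [Finset.sum_add_distrib, Finset.sum_add_distrib, Finset.sum_add_distrib]
          _ = _ := by
              rw [← Finset.mul_sum, hUrow i]
              rw [Finset.sum_const, Finset.card_univ, Fintype.card_fin, nsmul_eq_mul]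
              rw [← Finset.mul_sum, husum, Finset.sum_ite_eq]
              simp only [Finset.mem_univ, if_true]
              ring
      rw [e1]
      simp only [hu'def]
      push_cast
      linear_combination (u i) * ht - (u i) * t * hmR
    · -- hc1'
      intro i j
      simp only [Matrix.vecMulVec_apply]
      have := hkey i j
      linarith
    · -- hc2'
      intro i j
      simp only [Matrix.vecMulVec_apply]
      nlinarith [hx0 j, hu'x i]
    · -- hc3'
      intro i j
      simp only [Matrix.vecMulVec_apply]
      nlinarith [hkey i j, mul_nonneg (hx0 j) (sub_nonneg.mpr (hu'x i))]
    · -- R' ≥ 0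
      intro i j
      simp only [Matrix.vecMulVec_apply]
      exact mul_nonneg (hx0 i) (hu'0 j)
    · -- U' ≥ 0
      intro i j
      simp only [hU'def, Matrix.of_apply]
      by_cases hij : i = j
      · subst hij; rw [if_pos rfl]
        nlinarith [hU0 i i, hu0 i, hu1 i, mul_nonneg h12 (hU0 i i), ht0.le]
      · rw [if_neg hij]
        nlinarith [hU0 i j, hu0 i, hu0 j, mul_nonneg h12 (hU0 i j), ht0.le,
          mul_nonneg ht0.le (hu0 i), mul_nonneg ht0.le (hu0 j)]
    · -- PSD
      refine bigMat_psd_of x u' U' hU'symm ?_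
      intro c
      set Su : ℝ := ∑ i, u i * c i with hSu
      set S1 : ℝ := ∑ i, c i with hS1
      set W1 : ℝ := ∑ i, (1 - u i) * c i with hW1def
      set W2 : ℝ := ∑ i, (1 - u i) * c i ^ 2 with hW2def
      set Q : ℝ := ∑ i, ∑ j, c i * U i j * c j with hQdef
      have hexp : (∑ i, ∑ j, c i * U' i j * c j)
          = (1 - 2 * t) * Q + t * (Su * S1) + t * (S1 * Su) + t * W2 := by
        have e0 : ∀ i j, c i * U' i j * c j
            = (1 - 2 * t) * (c i * U i j * c j) + t * ((u i * c i) * c j)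
              + t * (c i * (u j * c j))
              + (if i = j then t * ((1 - u i) * (c i * c j)) else 0) := by
          intro i j
          by_cases hij : i = j
          · subst hij; simp only [hU'def, Matrix.of_apply, eq_self_iff_true, if_true]; ring
          · simp only [hU'def, Matrix.of_apply, if_neg hij]; ring
        calc (∑ i, ∑ j, c i * U' i j * c j)
            = ∑ i, ((∑ j, (1 - 2 * t) * (c i * U i j * c j))
                + (∑ j, t * ((u i * c i) * c j)) + (∑ j, t * (c i * (u j * c j)))
                + (∑ j, if i = j then t * ((1 - u i) * (c i * c j)) else 0)) := by
              refine Finset.sum_congr rfl fun i _ => ?_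
              rw [← Finset.sum_add_distrib, ← Finset.sum_add_distrib, ← Finset.sum_add_distrib]
              exact Finset.sum_congr rfl fun j _ => e0 i j
          _ = (∑ i, ∑ j, (1 - 2 * t) * (c i * U i j * c j))
              + (∑ i, ∑ j, t * ((u i * c i) * c j)) + (∑ i, ∑ j, t * (c i * (u j * c j)))
              + (∑ i, ∑ j, if i = j then t * ((1 - u i) * (c i * c j)) else 0) := by
              rw [Finset.sum_add_distrib, Finset.sum_add_distrib, Finset.sum_add_distrib]
          _ = (1 - 2 * t) * Q + t * (Su * S1) + t * (S1 * Su) + t * W2 := by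
              have p1 : (∑ i, ∑ j, (1 - 2 * t) * (c i * U i j * c j)) = (1 - 2 * t) * Q := by
                rw [hQdef, Finset.mul_sum]
                exact Finset.sum_congr rfl fun i _ => by rw [Finset.mul_sum]
              have p2 : (∑ i, ∑ j, t * ((u i * c i) * c j)) = t * (Su * S1) := by
                rw [hSu, hS1, Finset.sum_mul_sum, Finset.mul_sum]
                exact Finset.sum_congr rfl fun i _ => by rw [Finset.mul_sum]
              have p3 : (∑ i, ∑ j, t * (c i * (u j * c j))) = t * (S1 * Su) := by
                rw [hS1, hSu, Finset.sum_mul_sum, Finset.mul_sum]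
                exact Finset.sum_congr rfl fun i _ => by rw [Finset.mul_sum]
              have p4 : (∑ i, ∑ j, if i = j then t * ((1 - u i) * (c i * c j)) else 0)
                  = t * W2 := by
                rw [hW2def, Finset.mul_sum]
                refine Eq.trans
                  (Finset.sum_congr rfl fun i _ => Finset.sum_ite_eq Finset.univ i _) ?_
                simp only [Finset.mem_univ, if_true]
                exact Finset.sum_congr rfl fun i _ => by ring
              rw [p1, p2, p3, p4]
      have hSu' : (∑ i, u' i * c i) = Su + t * W1 := by
        calc (∑ i, u' i * c i) = ∑ i, (u i * c i + t * ((1 - u i) * c i)) := by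
              exact Finset.sum_congr rfl fun i _ => by simp only [hu'def]; ring
          _ = Su + t * W1 := by
              rw [Finset.sum_add_distrib, ← Finset.mul_sum, hSu, hW1def]
      have hW1S : W1 = S1 - Su := by
        rw [hW1def, hS1, hSu, ← Finset.sum_sub_distrib]
        exact Finset.sum_congr rfl fun i _ => by ring
      have hCS : W1 ^ 2 ≤ mR * W2 := by
        have e1 : (∑ i, (1 - u i)) = mR := by
          rw [Finset.sum_sub_distrib, husum, hmR']
        rw [hW1def, hW2def, ← e1]
        exact Finset.sum_sq_le_sum_mul_sum_of_sq_eq_mul Finset.univ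
          (fun i _ => by linarith [hu1 i]) (fun i _ => mul_nonneg (by linarith [hu1 i]) (sq_nonneg _))
          (fun i _ => by ring)
      have hQc : Su ^ 2 ≤ Q := hQ c
      have ht2 : t ^ 2 * mR = t := by
        rw [pow_two, mul_assoc, ht, mul_one]
      have htW2 : t * W2 = t ^ 2 * (mR * W2) := by
        rw [← mul_assoc, ht2]
      have hCS' : (S1 - Su) ^ 2 ≤ mR * W2 := by rw [← hW1S]; exact hCS
      rw [hSu', hexp, hW1S]
      nlinarith [mul_nonneg h12 (sub_nonneg.mpr hQc),
        mul_nonneg (sq_nonneg t) (sub_nonneg.mpr hCS'), htW2]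

end
end
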